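/- Let F be a nilpotent endomorphism of V acting as the left shift in a fixed Jordan basis, F^t the right shift, V_+ = ker F^t, V_− = ker F. For every k ≥ 1 the following identity holds in End(V): (1 − 1_{V_+ ∩ (F^t)^{k−1} V_−}) 1_{V_+} (F^t)^{k−1} = 1_{V_+} (F^t)^k F. -/

import Mathlib

/-- A "box" of the pyramid attached to the partition `p₁^{r₁} ⋯ p_s^{r_s}`. The last
coordinate is the position of the box in its row, counted from the right
(`0` = rightmost box). -/
abbrev PyramidBox {s : ℕ} (p r : Fin s → ℕ) : Type := (i : Fin s) × (Fin (r i) × Fin (p i))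

/-- with `F` the left shift of a pyramid, `Fᵗ` the right shift,
`Pplus = 1_{V₊}` the projection onto `V₊ = ker Fᵗ` and `Qplus h = 1_{V₊ ∩ (Fᵗ)^h V₋}` the
projection onto rightmost boxes of rows of length `h+1`, for every `k ≥ 1` one has
`(1 − 1_{V₊ ∩ (Fᵗ)^{k−1} V₋}) 1_{V₊} (Fᵗ)^{k−1} = 1_{V₊} (Fᵗ)^k F` in `End(V)`. -/
theorem stmt10 {K : Type*} [Field K] [CharZero K]
    {V : Type*} [AddCommGroup V] [Module K V]
    {s : ℕ} (p r : Fin s → ℕ)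
    (b : Module.Basis (PyramidBox p r) K V)
    (F Ft Pplus : Module.End K V) (Qplus : ℕ → Module.End K V)
    (hF : ∀ x : PyramidBox p r,
      F (b x) = if h : (x.2.2 : ℕ) + 1 < p x.1
        then b ⟨x.1, x.2.1, ⟨(x.2.2 : ℕ) + 1, h⟩⟩ else 0)
    (hFt : ∀ x : PyramidBox p r,
      Ft (b x) = if 0 < (x.2.2 : ℕ)
        then b ⟨x.1, x.2.1, ⟨(x.2.2 : ℕ) - 1, Nat.lt_of_le_of_lt (Nat.sub_le _ _) x.2.2.isLt⟩⟩
        else 0)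
    (hPplus : ∀ x : PyramidBox p r, Pplus (b x) = if (x.2.2 : ℕ) = 0 then b x else 0)
    (hQplus : ∀ (n : ℕ) (x : PyramidBox p r),
      Qplus n (b x) = if ((x.2.2 : ℕ) = 0 ∧ p x.1 = n + 1) then b x else 0)
    (k : ℕ) (hk : 1 ≤ k) :
    (1 - Qplus (k - 1)) * Pplus * Ft ^ (k - 1) = Pplus * Ft ^ k * F := by
  have hFtpow : ∀ (n : ℕ) (x : PyramidBox p r), (Ft ^ n) (b x) =
      if h : n ≤ (x.2.2 : ℕ) then
        b ⟨x.1, x.2.1, ⟨(x.2.2 : ℕ) - n, Nat.lt_of_le_of_lt (Nat.sub_le _ _) x.2.2.isLt⟩⟩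
      else 0 := by
    intro n
    induction n with
    | zero =>
      intro x
      simp
    | succ n ih =>
      intro x
      rw [pow_succ, Module.End.mul_apply, hFt]
      by_cases h0 : 0 < (x.2.2 : ℕ)
      · rw [if_pos h0, ih]
        dsimp only
        by_cases h1 : n + 1 ≤ (x.2.2 : ℕ)
        · rw [dif_pos (by omega : n ≤ (x.2.2 : ℕ) - 1), dif_pos h1]
          have h2 : (x.2.2 : ℕ) - 1 - n = (x.2.2 : ℕ) - (n + 1) := by omega
          simp only [h2]
        · rw [dif_neg (by omega), dif_neg h1]
      · rw [if_neg h0, map_zero, dif_neg (by omega)]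
  obtain ⟨m, rfl⟩ : ∃ m, k = m + 1 := ⟨k - 1, (Nat.succ_pred_eq_of_pos hk).symm⟩
  refine b.ext fun x => ?_
  simp only [Module.End.mul_apply, Nat.add_sub_cancel, hF]
  by_cases hx : (x.2.2 : ℕ) + 1 < p x.1
  · rw [dif_pos hx, hFtpow, hFtpow]
    dsimp only
    by_cases hm : m ≤ (x.2.2 : ℕ)
    · rw [dif_pos hm, dif_pos (by omega : m + 1 ≤ (x.2.2 : ℕ) + 1), hPplus, hPplus]
      dsimp only
      by_cases he : (x.2.2 : ℕ) = m
      · rw [if_pos (by omega : (x.2.2 : ℕ) - m = 0),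
          if_pos (by omega : (x.2.2 : ℕ) + 1 - (m + 1) = 0)]
        rw [LinearMap.sub_apply, Module.End.one_apply, hQplus]
        dsimp only
        rw [if_neg (by push_neg; intro _; omega)]
        have h3 : (x.2.2 : ℕ) - m = (x.2.2 : ℕ) + 1 - (m + 1) := by omega
        simp only [h3, sub_zero]
      · rw [if_neg (by omega), if_neg (by omega), map_zero]
    · rw [dif_neg hm, dif_neg (by omega)]
      simp
  · rw [dif_neg hx, map_zero, map_zero, hFtpow]
    by_cases hm : m ≤ (x.2.2 : ℕ)
    · rw [dif_pos hm, hPplus]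
      dsimp only
      by_cases he : (x.2.2 : ℕ) = m
      · rw [if_pos (by omega : (x.2.2 : ℕ) - m = 0)]
        rw [LinearMap.sub_apply, Module.End.one_apply, hQplus]
        dsimp only
        rw [if_pos ⟨by omega, by omega⟩]
        simp
      · rw [if_neg (by omega), map_zero]
    · rw [dif_neg hm, map_zero, map_zero]
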